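/- arXiv:2107.07245 — 2 statements merged into one kernel-verified Lean document; each statement's English description precedes it below -/
import Mathlib

section
/- For real s > 1, Γ(s)·L(s,χ) = ∫₀^∞ t^{s-1}/(2·cosh t) dt, where χ is the nontrivial Dirichlet character mod 4. -/
/-- The nontrivial Dirichlet character mod 4, as a function on ℕ. -/
def chi4 (d : ℕ) : ℝ :=
  if d % 4 = 1 then 1 else if d % 4 = 3 then -1 else 0

lemma chi4_abs_le (d : ℕ) : |chi4 d| ≤ 1 := by
  unfold chi4
  split
  · norm_num
  · split <;> norm_num

lemma chi4_even (m : ℕ) : chi4 (2 * m) = 0 := by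
  unfold chi4
  rw [if_neg (by omega), if_neg (by omega)]

lemma chi4_odd (k : ℕ) : chi4 (2 * k + 1) = (-1 : ℝ) ^ k := by
  rcases Nat.even_or_odd k with ⟨m, rfl⟩ | ⟨m, rfl⟩
  · unfold chi4
    rw [if_pos (by omega), Even.neg_one_pow ⟨m, rfl⟩]
  · unfold chi4
    rw [if_neg (by omega), if_pos (by omega), Odd.neg_one_pow ⟨m, rfl⟩]

lemma hasSum_chi4_exp (t : ℝ) (ht : 0 < t) :
    HasSum (fun n : ℕ ↦ chi4 (n + 1) * Real.exp (-((n : ℝ) + 1) * t))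
      (1 / (2 * Real.cosh t)) := by
  set x := Real.exp (-t) with hx
  have hx0 : 0 < x := Real.exp_pos _
  have hx1 : x < 1 := by
    rw [hx, Real.exp_lt_one_iff]; linarith
  have hxe : x * Real.exp t = 1 := by
    rw [hx, ← Real.exp_add]; simp
  set f : ℕ → ℝ := fun n ↦ chi4 (n + 1) * x ^ (n + 1) with hf
  have hnorm : ‖-(x ^ 2)‖ < 1 := by
    rw [norm_neg, norm_pow, Real.norm_eq_abs, abs_of_pos hx0]
    nlinarith
  have hgeo : HasSum (fun k : ℕ ↦ (-(x ^ 2)) ^ k) (1 - -(x ^ 2))⁻¹ :=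
    hasSum_geometric_of_norm_lt_one hnorm
  have heven : HasSum (fun k : ℕ ↦ f (2 * k)) (x * (1 + x ^ 2)⁻¹) := by
    have h := hgeo.mul_left x
    have h2 : (fun k : ℕ ↦ f (2 * k)) = fun k ↦ x * (-(x ^ 2)) ^ k := by
      funext k
      simp only [hf]
      rw [chi4_odd, show (-(x ^ 2) : ℝ) = (-1) * x ^ 2 by ring, mul_pow, ← pow_mul]
      ring
    have h3 : (1 - -(x ^ 2))⁻¹ = (1 + x ^ 2)⁻¹ := by ring_nf
    rw [h2]
    rwa [h3] at h
  have hodd : HasSum (fun k : ℕ ↦ f (2 * k + 1)) 0 := by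
    have h2 : (fun k : ℕ ↦ f (2 * k + 1)) = fun _ ↦ (0 : ℝ) := by
      funext k
      simp only [hf]
      have : 2 * k + 1 + 1 = 2 * (k + 1) := by ring
      rw [this, chi4_even, zero_mul]
    rw [h2]
    exact hasSum_zero
  have hsum : HasSum f (x * (1 + x ^ 2)⁻¹ + 0) := HasSum.even_add_odd heven hodd
  have hval : x * (1 + x ^ 2)⁻¹ + 0 = 1 / (2 * Real.cosh t) := by
    rw [Real.cosh_eq, ← hx]
    have h1 : (0:ℝ) < 1 + x ^ 2 := by positivity
    have h2 : (0:ℝ) < Real.exp t + x := by positivity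
    field_simp
    nlinarith [hxe]
  rw [hval] at hsum
  refine hsum.congr_fun fun n ↦ ?_
  simp only [hf]
  congr 1
  rw [hx, ← Real.exp_nat_mul]
  congr 1
  push_cast
  ring

theorem gamma_mul_L_eq_integral (s : ℝ) (hs : 1 < s) :
    Real.Gamma s * ∑' n : ℕ, chi4 (n + 1) * ((n : ℝ) + 1) ^ (-s) =
      ∫ t in Set.Ioi (0 : ℝ), t ^ (s - 1) / (2 * Real.cosh t) := by
  have hs0 : 0 < s := by linarith
  set F : ℕ → ℝ → ℝ :=
    fun n t ↦ chi4 (n + 1) * (t ^ (s - 1) * Real.exp (-((n : ℝ) + 1) * t)) with hF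
  have hpos : ∀ n : ℕ, (0:ℝ) < (n : ℝ) + 1 := fun n ↦ by positivity
  -- integrability of each term
  have hint0 : ∀ n : ℕ, MeasureTheory.IntegrableOn
      (fun t : ℝ ↦ t ^ (s - 1) * Real.exp (-((n : ℝ) + 1) * t)) (Set.Ioi 0) := by
    intro n
    have h := integrableOn_rpow_mul_exp_neg_mul_rpow (p := 1) (s := s - 1)
      (b := (n : ℝ) + 1) (by linarith) one_pos (hpos n)
    refine h.congr_fun (fun t ht ↦ ?_) measurableSet_Ioi
    simp only [Real.rpow_one]
  have hint : ∀ n : ℕ, MeasureTheory.IntegrableOn (F n) (Set.Ioi 0) :=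
    fun n ↦ ((hint0 n).const_mul _)
  -- value of each integral
  have hval : ∀ n : ℕ, ∫ t in Set.Ioi (0:ℝ), F n t
      = Real.Gamma s * (chi4 (n + 1) * ((n : ℝ) + 1) ^ (-s)) := by
    intro n
    rw [hF]
    simp only
    simp_rw [neg_mul]
    rw [MeasureTheory.integral_const_mul,
      Real.integral_rpow_mul_exp_neg_mul_Ioi hs0 (hpos n),
      one_div, Real.inv_rpow (hpos n).le, ← Real.rpow_neg (hpos n).le]
    ring
  -- norms of integrals summable
  have hnormval : ∀ n : ℕ, ∫ t in Set.Ioi (0:ℝ), ‖F n t‖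
      ≤ Real.Gamma s * ((n : ℝ) + 1) ^ (-s) := by
    intro n
    have heq : ∫ t in Set.Ioi (0:ℝ), ‖F n t‖
        = |chi4 (n + 1)| * ((1 / ((n : ℝ) + 1)) ^ s * Real.Gamma s) := by
      rw [← Real.integral_rpow_mul_exp_neg_mul_Ioi hs0 (hpos n),
        ← MeasureTheory.integral_const_mul]
      refine MeasureTheory.setIntegral_congr_fun measurableSet_Ioi (fun t ht ↦ ?_)
      rw [hF]
      simp only
      rw [Real.norm_eq_abs, abs_mul, abs_mul, abs_of_nonneg (Real.rpow_nonneg (le_of_lt ht) _),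
        abs_of_nonneg (Real.exp_pos _).le, neg_mul]
    rw [heq]
    have h1 : (1 / ((n : ℝ) + 1)) ^ s = ((n : ℝ) + 1) ^ (-s) := by
      rw [one_div, Real.inv_rpow (hpos n).le, ← Real.rpow_neg (hpos n).le]
    rw [h1]
    have h2 : (0:ℝ) ≤ ((n : ℝ) + 1) ^ (-s) * Real.Gamma s :=
      mul_nonneg (Real.rpow_nonneg (hpos n).le _) (Real.Gamma_nonneg_of_nonneg hs0.le)
    calc |chi4 (n + 1)| * (((n : ℝ) + 1) ^ (-s) * Real.Gamma s)
        ≤ 1 * (((n : ℝ) + 1) ^ (-s) * Real.Gamma s) :=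
          mul_le_mul_of_nonneg_right (chi4_abs_le _) h2
      _ = Real.Gamma s * ((n : ℝ) + 1) ^ (-s) := by ring
  have hsummable_aux : Summable (fun n : ℕ ↦ Real.Gamma s * ((n : ℝ) + 1) ^ (-s)) := by
    apply Summable.mul_left
    have h : Summable (fun n : ℕ ↦ (n : ℝ) ^ (-s)) :=
      Real.summable_nat_rpow.mpr (by linarith)
    have := h.comp_injective (add_right_injective 1)
    refine this.congr fun n ↦ ?_
    simp [Function.comp]
    ring_nf
  have hF_sum : Summable (fun n : ℕ ↦ ∫ t in Set.Ioi (0:ℝ), ‖F n t‖) := by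
    refine Summable.of_nonneg_of_le (fun n ↦ ?_) (fun n ↦ hnormval n) hsummable_aux
    exact MeasureTheory.integral_nonneg fun t ↦ norm_nonneg _
  have hswap := MeasureTheory.integral_tsum_of_summable_integral_norm
    (μ := MeasureTheory.volume.restrict (Set.Ioi 0)) hint hF_sum
  have hLHS : Real.Gamma s * ∑' n : ℕ, chi4 (n + 1) * ((n : ℝ) + 1) ^ (-s)
      = ∑' n : ℕ, ∫ t in Set.Ioi (0:ℝ), F n t := by
    rw [← tsum_mul_left]
    exact tsum_congr fun n ↦ (hval n).symm
  rw [hLHS, hswap]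
  refine MeasureTheory.setIntegral_congr_fun measurableSet_Ioi (fun t ht ↦ ?_)
  have hts : ∑' n : ℕ, F n t = t ^ (s - 1) * (1 / (2 * Real.cosh t)) := by
    rw [← (hasSum_chi4_exp t ht).tsum_eq, ← tsum_mul_left]
    refine tsum_congr fun n ↦ ?_
    rw [hF]
    ring
  rw [hts]
  ring
end

section
/- lim_{s→1⁺} ( (2/π)·ζ(s)·L(s,χ) - ζ(2s-1) ) = (1/π)·∫₀^∞ (log t)/cosh t dt, where χ is the nontrivial Dirichlet character mod 4. -/
open Filter

namespace ZLaux

open MeasureTheory Set Topology Real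

noncomputable def Zf (s : ℝ) : ℝ := ∑' n : ℕ, ((n : ℝ) + 1) ^ (-s)
noncomputable def Lf (s : ℝ) : ℝ := ∑' n : ℕ, chi4 (n + 1) * ((n : ℝ) + 1) ^ (-s)
noncomputable def aa (k : ℕ) : ℝ := 4 * k + 1
noncomputable def bb (k : ℕ) : ℝ := 4 * k + 3
noncomputable def Ak (k : ℕ) : ℝ := Real.log (bb k) / bb k - Real.log (aa k) / aa k
noncomputable def Atot : ℝ := ∑' k, Ak k
noncomputable def Ck (k : ℕ) : ℝ := 2 * ((1 + 2 * Real.log (bb k)) * aa k ^ (-(2:ℝ)))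

lemma aa_pos (k : ℕ) : 0 < aa k := by unfold aa; positivity
lemma bb_pos (k : ℕ) : 0 < bb k := by unfold bb; positivity
lemma one_le_aa (k : ℕ) : 1 ≤ aa k := by
  unfold aa; have : (0:ℝ) ≤ (k : ℝ) := Nat.cast_nonneg k; linarith
lemma one_le_bb (k : ℕ) : 1 ≤ bb k := by
  unfold bb; have : (0:ℝ) ≤ (k : ℝ) := Nat.cast_nonneg k; linarith
lemma aa_le_bb (k : ℕ) : aa k ≤ bb k := by unfold aa bb; linarith

lemma rpow_anti {x y r : ℝ} (hx : 0 < x) (hxy : x ≤ y) (hr : 0 ≤ r) :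
    y ^ (-r) ≤ x ^ (-r) := by
  rw [Real.rpow_neg (hx.trans_le hxy).le, Real.rpow_neg hx.le]
  exact inv_anti₀ (Real.rpow_pos_of_pos hx r) (Real.rpow_le_rpow hx.le hxy hr)

lemma summable_shift {p : ℝ} (hp : p < -1) :
    Summable (fun n : ℕ => ((n : ℝ) + 1) ^ p) := by
  have := (Real.summable_nat_rpow (p := p)).mpr hp
  have h2 := (summable_nat_add_iff 1).mpr this
  refine h2.congr fun n => ?_
  push_cast
  rfl

lemma summable_zf {s : ℝ} (hs : 1 < s) :
    Summable (fun n : ℕ => ((n : ℝ) + 1) ^ (-s)) :=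
  summable_shift (by linarith)

lemma abs_chi4_le (d : ℕ) : |chi4 d| ≤ 1 := by
  unfold chi4; split_ifs <;> norm_num

lemma summable_lf {s : ℝ} (hs : 1 < s) :
    Summable (fun n : ℕ => chi4 (n + 1) * ((n : ℝ) + 1) ^ (-s)) := by
  refine (summable_zf hs).of_norm_bounded fun n => ?_
  rw [norm_mul]
  have h1 : ‖((n : ℝ) + 1) ^ (-s)‖ = ((n : ℝ) + 1) ^ (-s) := by
    rw [Real.norm_eq_abs, abs_of_pos]; positivity
  rw [h1]
  calc ‖chi4 (n + 1)‖ * ((n : ℝ) + 1) ^ (-s) ≤ 1 * ((n : ℝ) + 1) ^ (-s) := by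
        apply mul_le_mul_of_nonneg_right (abs_chi4_le _) (by positivity)
    _ = _ := one_mul _

lemma Zf_eq_aux (s : ℝ) : Zf s = ∑' n : ℕ, 1 / ((n : ℝ) + 1) ^ s := by
  unfold Zf
  refine tsum_congr fun n => ?_
  rw [Real.rpow_neg (by positivity), one_div]

lemma tendsto_Zf_sub :
    Tendsto (fun s : ℝ => Zf s - 1 / (s - 1)) (𝓝[>] 1) (𝓝 Real.eulerMascheroniConstant) := by
  simp only [Zf_eq_aux]
  have key : Tendsto (fun s : ℝ => (∑' n : ℕ, 1 / ((n : ℝ) + 1) ^ s) - 1 / (s - 1)) (𝓝[>] 1)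
      (𝓝 (1 - ZetaAsymptotics.term_tsum 1)) := by
    apply Tendsto.congr'
    · filter_upwards [self_mem_nhdsWithin] with s hs
      exact (ZetaAsymptotics.zeta_limit_aux1 hs).symm
    · apply tendsto_const_nhds.sub
      rw [← one_mul (ZetaAsymptotics.term_tsum 1)]
      exact (tendsto_id.mono_left nhdsWithin_le_nhds).mul
        ((ZetaAsymptotics.continuousOn_term_tsum.continuousWithinAt self_mem_Ici).mono_left
          (nhdsWithin_mono _ Ioi_subset_Ici_self))
  have h1 : 1 - ZetaAsymptotics.term_tsum 1 = Real.eulerMascheroniConstant := by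
    have h := ZetaAsymptotics.term_tsum_one.tsum_eq
    change ZetaAsymptotics.term_tsum 1 = _ at h
    rw [h]; ring
  rwa [h1] at key

lemma tendsto_two_s : Tendsto (fun s : ℝ => 2 * s - 1) (𝓝[>] 1) (𝓝[>] 1) := by
  rw [tendsto_nhdsWithin_iff]
  constructor
  · have h : Tendsto (fun s : ℝ => 2 * s - 1) (𝓝 1) (𝓝 1) := by
      exact ((continuous_const.mul continuous_id).sub continuous_const).tendsto' 1 1 (by norm_num)
    exact h.mono_left nhdsWithin_le_nhds
  · filter_upwards [self_mem_nhdsWithin] with s hs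
    simp only [Set.mem_Ioi] at hs ⊢; linarith

lemma tendsto_Zf2_sub :
    Tendsto (fun s : ℝ => Zf (2 * s - 1) - 1 / (2 * s - 2)) (𝓝[>] 1)
      (𝓝 Real.eulerMascheroniConstant) := by
  have h := tendsto_Zf_sub.comp tendsto_two_s
  refine h.congr fun s => ?_
  simp only [Function.comp_apply]
  ring_nf

lemma tendsto_sub_one :
    Tendsto (fun s : ℝ => s - 1) (𝓝[>] (1:ℝ)) (𝓝 0) := by
  have h : Tendsto (fun s : ℝ => s - 1) (𝓝 1) (𝓝 0) := by
    exact (continuous_id.sub continuous_const).tendsto' 1 0 (by norm_num)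
  exact h.mono_left nhdsWithin_le_nhds

lemma tendsto_sub_one_mul_Zf :
    Tendsto (fun s : ℝ => (s - 1) * Zf s) (𝓝[>] 1) (𝓝 1) := by
  have h1 := (tendsto_sub_one.mul tendsto_Zf_sub).add (tendsto_const_nhds (x := (1:ℝ)))
  rw [zero_mul, zero_add] at h1
  refine h1.congr' ?_
  filter_upwards [self_mem_nhdsWithin] with s hs
  have hne : s - 1 ≠ 0 := by
    simp only [Set.mem_Ioi] at hs; intro h; linarith
  field_simp
  ring

lemma chi4_1 (k : ℕ) : chi4 (k * 4 + 1) = 1 := by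
  have h : (k * 4 + 1) % 4 = 1 := by omega
  simp [chi4, h]

lemma chi4_2 (k : ℕ) : chi4 (k * 4 + 2) = 0 := by
  have h : (k * 4 + 2) % 4 = 2 := by omega
  simp [chi4, h]

lemma chi4_3 (k : ℕ) : chi4 (k * 4 + 3) = -1 := by
  have h : (k * 4 + 3) % 4 = 3 := by omega
  simp [chi4, h]

lemma chi4_4 (k : ℕ) : chi4 (k * 4 + 4) = 0 := by
  have h : (k * 4 + 4) % 4 = 0 := by omega
  simp [chi4, h]

set_option maxHeartbeats 1000000 in
lemma Lf_eq {s : ℝ} (hs : 1 < s) :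
    Lf s = ∑' k : ℕ, (aa k ^ (-s) - bb k ^ (-s)) := by
  classical
  set f : ℕ → ℝ := fun n => chi4 (n + 1) * ((n : ℝ) + 1) ^ (-s) with hf
  have hsum : Summable f := summable_lf hs
  set e : ℕ × Fin 4 ≃ ℕ := (Nat.divModEquiv 4).symm with he
  have hsum2 : Summable (fun p : ℕ × Fin 4 => f (e p)) := e.summable_iff.mpr hsum
  have happ : ∀ (k : ℕ) (j : Fin 4), e (k, j) = k * 4 + (j : ℕ) := by
    intro k j
    rw [he]
    simp [Nat.divModEquiv_symm_apply]
  have hfib : ∀ k : ℕ, HasSum (fun j : Fin 4 => f (e (k, j)))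
      (aa k ^ (-s) - bb k ^ (-s)) := by
    intro k
    have h := hasSum_fintype (fun j : Fin 4 => f (e (k, j)))
    convert h using 1
    rw [Fin.sum_univ_four]
    simp only [happ, hf]
    have j0 : ((0 : Fin 4) : ℕ) = 0 := rfl
    have j1 : ((1 : Fin 4) : ℕ) = 1 := rfl
    have j2 : ((2 : Fin 4) : ℕ) = 2 := rfl
    have j3 : ((3 : Fin 4) : ℕ) = 3 := rfl
    rw [j0, j1, j2, j3]
    rw [show k * 4 + 0 + 1 = k * 4 + 1 by omega, show k * 4 + 1 + 1 = k * 4 + 2 by omega,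
      show k * 4 + 2 + 1 = k * 4 + 3 by omega, show k * 4 + 3 + 1 = k * 4 + 4 by omega,
      chi4_1, chi4_2, chi4_3, chi4_4]
    have ha : ((k * 4 + 0 : ℕ) : ℝ) + 1 = aa k := by unfold aa; push_cast; ring
    have hb : ((k * 4 + 2 : ℕ) : ℝ) + 1 = bb k := by unfold bb; push_cast; ring
    rw [ha, hb]
    ring
  have h5 := (hsum2.hasSum.prod_fiberwise hfib).tsum_eq
  rw [show Lf s = ∑' n, f n from rfl, ← e.tsum_eq f, h5]

lemma sum_pair_eq (K : ℕ) :
    ∑ k ∈ Finset.range K, (1 / aa k - 1 / bb k) =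
      ∑ i ∈ Finset.range (2 * K), (-1 : ℝ) ^ i / (2 * i + 1) := by
  induction K with
  | zero => simp
  | succ K ih =>
    rw [Finset.sum_range_succ, ih, show 2 * (K + 1) = (2 * K) + 1 + 1 by omega]
    rw [Finset.sum_range_succ, Finset.sum_range_succ]
    have h1 : (-1 : ℝ) ^ (2 * K) = 1 := by
      rw [pow_mul]; norm_num
    have h2 : (-1 : ℝ) ^ (2 * K + 1) = -1 := by
      rw [pow_succ, h1]; norm_num
    unfold aa bb
    rw [h1, h2]
    push_cast
    ring

lemma hasSum_pair : HasSum (fun k : ℕ => 1 / aa k - 1 / bb k) (Real.pi / 4) := by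
  refine (hasSum_iff_tendsto_nat_of_nonneg ?_ _).mpr ?_
  · intro k
    have h1 : 1 / bb k ≤ 1 / aa k :=
      one_div_le_one_div_of_le (aa_pos k) (aa_le_bb k)
    linarith
  · have h2 : Tendsto (fun K : ℕ => 2 * K) atTop atTop :=
      tendsto_atTop_atTop.mpr fun n => ⟨n, fun m hm => by omega⟩
    have h3 := Real.tendsto_sum_pi_div_four.comp h2
    refine h3.congr fun K => ?_
    exact (sum_pair_eq K).symm

lemma hasDerivAt_rpow_neg {x : ℝ} (hx : 0 < x) (s₀ : ℝ) :
    HasDerivAt (fun s : ℝ => x ^ (-s)) (-Real.log x * x ^ (-s₀)) s₀ := by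
  have hfun : (fun s : ℝ => x ^ (-s)) = fun s => Real.exp (Real.log x * (-s)) := by
    funext s; rw [Real.rpow_def_of_pos hx]
  rw [hfun]
  have hinner : HasDerivAt (fun s : ℝ => Real.log x * (-s)) (Real.log x * (-1)) s₀ :=
    (hasDerivAt_neg s₀).const_mul (Real.log x)
  have h := (Real.hasDerivAt_exp (Real.log x * (-s₀))).comp s₀ hinner
  refine h.congr_deriv ?_
  rw [← Real.rpow_def_of_pos hx]
  ring

lemma hasDerivAt_hk (k : ℕ) (s₀ : ℝ) :
    HasDerivAt (fun s : ℝ => aa k ^ (-s) - bb k ^ (-s))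
      (-Real.log (aa k) * aa k ^ (-s₀) + Real.log (bb k) * bb k ^ (-s₀)) s₀ := by
  have h := (hasDerivAt_rpow_neg (aa_pos k) s₀).sub (hasDerivAt_rpow_neg (bb_pos k) s₀)
  refine h.congr_deriv ?_; ring

lemma tendsto_slope_k (k : ℕ) :
    Tendsto (fun s : ℝ => ((aa k ^ (-s) - bb k ^ (-s)) - (1 / aa k - 1 / bb k)) / (s - 1))
      (𝓝[>] 1) (𝓝 (Ak k)) := by
  have hd := hasDerivAt_hk k 1
  have hval : -Real.log (aa k) * aa k ^ (-(1:ℝ)) + Real.log (bb k) * bb k ^ (-(1:ℝ)) = Ak k := by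
    rw [Real.rpow_neg_one, Real.rpow_neg_one]
    unfold Ak
    field_simp
    ring
  have hslope := hasDerivAt_iff_tendsto_slope.mp hd
  have hmono : 𝓝[>] (1:ℝ) ≤ 𝓝[≠] (1:ℝ) := nhdsWithin_mono _ fun x hx => ne_of_gt hx
  have h2 := hslope.mono_left hmono
  rw [hval] at h2
  refine h2.congr fun s => ?_
  rw [slope_def_field]
  have h1 : aa k ^ (-(1:ℝ)) - bb k ^ (-(1:ℝ)) = 1 / aa k - 1 / bb k := by
    rw [Real.rpow_neg_one, Real.rpow_neg_one, one_div, one_div]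
  rw [h1]

lemma psi_deriv {σ : ℝ} (x : ℝ) (hx : 1 ≤ x) :
    HasDerivAt (fun y : ℝ => Real.log y * y ^ (-σ))
      (x⁻¹ * x ^ (-σ) + Real.log x * (-σ * x ^ (-σ - 1))) x := by
  have h1 : HasDerivAt Real.log x⁻¹ x := Real.hasDerivAt_log (by linarith)
  have h2 : HasDerivAt (fun y : ℝ => y ^ (-σ)) (-σ * x ^ (-σ - 1)) x :=
    Real.hasDerivAt_rpow_const (Or.inl (by linarith))
  exact h1.mul h2

lemma psi_deriv_bound {σ : ℝ} (hσ : σ ∈ Set.Icc (1:ℝ) 2) {k : ℕ} {x : ℝ}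
    (hx : x ∈ Set.Icc (aa k) (bb k)) :
    |x⁻¹ * x ^ (-σ) + Real.log x * (-σ * x ^ (-σ - 1))|
      ≤ (1 + 2 * Real.log (bb k)) * aa k ^ (-(2:ℝ)) := by
  obtain ⟨hx1, hx2⟩ := hx
  have hx0 : (1:ℝ) ≤ x := le_trans (one_le_aa k) hx1
  have hxpos : 0 < x := by linarith
  have hlogx : 0 ≤ Real.log x := Real.log_nonneg hx0
  have hσ1 : 1 ≤ σ := hσ.1
  have hσ2 : σ ≤ 2 := hσ.2
  have e1 : x⁻¹ * x ^ (-σ) = x ^ (-σ - 1) := by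
    rw [← Real.rpow_neg_one x, ← Real.rpow_add hxpos]; ring_nf
  have e2 : x ^ (-σ - 1) ≤ aa k ^ (-(2:ℝ)) := by
    calc x ^ (-σ - 1) ≤ x ^ (-(2:ℝ)) :=
          Real.rpow_le_rpow_of_exponent_le hx0 (by linarith)
      _ ≤ aa k ^ (-(2:ℝ)) := rpow_anti (aa_pos k) hx1 (by norm_num)
  have hposσ : 0 < x ^ (-σ - 1) := Real.rpow_pos_of_pos hxpos _
  have hlogbb : Real.log x ≤ Real.log (bb k) := Real.log_le_log hxpos hx2
  have hbbnn : 0 ≤ Real.log (bb k) := le_trans hlogx hlogbb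
  calc |x⁻¹ * x ^ (-σ) + Real.log x * (-σ * x ^ (-σ - 1))|
      ≤ |x⁻¹ * x ^ (-σ)| + |Real.log x * (-σ * x ^ (-σ - 1))| := abs_add_le _ _
    _ = x ^ (-σ - 1) + Real.log x * σ * x ^ (-σ - 1) := by
        rw [e1, abs_of_pos hposσ, abs_mul, abs_of_nonneg hlogx, abs_mul, abs_neg,
          abs_of_nonneg (by linarith : (0:ℝ) ≤ σ), abs_of_pos hposσ]
        ring
    _ ≤ aa k ^ (-(2:ℝ)) + Real.log (bb k) * 2 * aa k ^ (-(2:ℝ)) := by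
        have hinner : Real.log x * σ ≤ Real.log (bb k) * 2 :=
          mul_le_mul hlogbb hσ2 (by linarith) hbbnn
        have houter : Real.log x * σ * x ^ (-σ - 1) ≤ Real.log (bb k) * 2 * aa k ^ (-(2:ℝ)) :=
          mul_le_mul hinner e2 hposσ.le (mul_nonneg hbbnn (by norm_num))
        linarith [e2]
    _ = (1 + 2 * Real.log (bb k)) * aa k ^ (-(2:ℝ)) := by ring

lemma slope_bound {s : ℝ} (hs : s ∈ Set.Ioc (1:ℝ) 2) (k : ℕ) :
    |((aa k ^ (-s) - bb k ^ (-s)) - (1 / aa k - 1 / bb k)) / (s - 1)| ≤ Ck k := by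
  obtain ⟨hs1, hs2⟩ := hs
  set D := (1 + 2 * Real.log (bb k)) * aa k ^ (-(2:ℝ)) with hD
  have step1 : ∀ σ ∈ Set.Icc (1:ℝ) 2,
      ‖-Real.log (aa k) * aa k ^ (-σ) + Real.log (bb k) * bb k ^ (-σ)‖ ≤ 2 * D := by
    intro σ hσ
    have hconv : Convex ℝ (Set.Icc (aa k) (bb k)) := convex_Icc _ _
    have hder : ∀ x ∈ Set.Icc (aa k) (bb k),
        HasDerivWithinAt (fun y : ℝ => Real.log y * y ^ (-σ))
          (x⁻¹ * x ^ (-σ) + Real.log x * (-σ * x ^ (-σ - 1))) (Set.Icc (aa k) (bb k)) x :=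
      fun x hx => (psi_deriv x (le_trans (one_le_aa k) hx.1)).hasDerivWithinAt
    have hbd : ∀ x ∈ Set.Icc (aa k) (bb k),
        ‖x⁻¹ * x ^ (-σ) + Real.log x * (-σ * x ^ (-σ - 1))‖ ≤ D :=
      fun x hx => psi_deriv_bound hσ hx
    have key := hconv.norm_image_sub_le_of_norm_hasDerivWithin_le hder hbd
      (Set.left_mem_Icc.mpr (aa_le_bb k)) (Set.right_mem_Icc.mpr (aa_le_bb k))
    rw [Real.norm_eq_abs, Real.norm_eq_abs] at key
    have hdiff : |bb k - aa k| = 2 := by unfold aa bb; rw [show 4*(k:ℝ)+3 - (4*(k:ℝ)+1) = 2 by ring]; norm_num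
    rw [hdiff] at key
    rw [Real.norm_eq_abs]
    have heq : Real.log (bb k) * bb k ^ (-σ) - Real.log (aa k) * aa k ^ (-σ)
        = -Real.log (aa k) * aa k ^ (-σ) + Real.log (bb k) * bb k ^ (-σ) := by ring
    rw [heq] at key
    linarith
  have hconv2 : Convex ℝ (Set.Icc (1:ℝ) 2) := convex_Icc _ _
  have hder2 : ∀ σ ∈ Set.Icc (1:ℝ) 2,
      HasDerivWithinAt (fun u : ℝ => aa k ^ (-u) - bb k ^ (-u))
        (-Real.log (aa k) * aa k ^ (-σ) + Real.log (bb k) * bb k ^ (-σ)) (Set.Icc (1:ℝ) 2) σ :=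
    fun σ _ => (hasDerivAt_hk k σ).hasDerivWithinAt
  have step2 := hconv2.norm_image_sub_le_of_norm_hasDerivWithin_le hder2 step1
    (Set.left_mem_Icc.mpr one_le_two) ⟨hs1.le, hs2⟩
  rw [Real.norm_eq_abs, Real.norm_eq_abs] at step2
  have h1 : aa k ^ (-(1:ℝ)) - bb k ^ (-(1:ℝ)) = 1 / aa k - 1 / bb k := by
    rw [Real.rpow_neg_one, Real.rpow_neg_one, one_div, one_div]
  rw [h1] at step2
  have hspos : 0 < s - 1 := by linarith
  rw [abs_div, div_le_iff₀ (abs_pos.mpr (ne_of_gt hspos))]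
  have hCk : Ck k = 2 * D := rfl
  rw [hCk]
  exact step2

lemma summable_shift32 : Summable (fun k : ℕ => 30 * ((k : ℝ) + 1) ^ (-(3/2) : ℝ)) :=
  (summable_shift (by norm_num)).mul_left 30

lemma Ck_nonneg (k : ℕ) : 0 ≤ Ck k := by
  have h := Real.log_nonneg (one_le_bb k)
  have h2 : (0:ℝ) ≤ aa k ^ (-(2:ℝ)) := (Real.rpow_pos_of_pos (aa_pos k) _).le
  unfold Ck
  apply mul_nonneg (by norm_num)
  exact mul_nonneg (by linarith) h2

lemma Ck_le (k : ℕ) : Ck k ≤ 30 * ((k : ℝ) + 1) ^ (-(3/2) : ℝ) := by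
  have hk1 : (0:ℝ) ≤ (k : ℝ) := Nat.cast_nonneg k
  have hbb : 0 < bb k := bb_pos k
  have hlog : Real.log (bb k) ≤ 2 * bb k ^ ((1:ℝ)/2) := by
    have h := Real.log_le_rpow_div hbb.le (by norm_num : (0:ℝ) < 1/2)
    have h2 : bb k ^ ((1:ℝ)/2) / (1/2) = 2 * bb k ^ ((1:ℝ)/2) := by ring
    linarith [h, h2.le]
  have hone : (1:ℝ) ≤ bb k ^ ((1:ℝ)/2) := Real.one_le_rpow (one_le_bb k) (by norm_num)
  have hbb7 : bb k ≤ 9 * ((k:ℝ) + 1) := by unfold bb; linarith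
  have hsq : bb k ^ ((1:ℝ)/2) ≤ 3 * ((k:ℝ)+1) ^ ((1:ℝ)/2) := by
    calc bb k ^ ((1:ℝ)/2) ≤ (9 * ((k:ℝ)+1)) ^ ((1:ℝ)/2) :=
          Real.rpow_le_rpow hbb.le hbb7 (by norm_num)
      _ = 3 * ((k:ℝ)+1) ^ ((1:ℝ)/2) := by
          rw [Real.mul_rpow (by norm_num) (by linarith)]
          congr 1
          rw [show (9:ℝ) = 3 ^ (2:ℕ) by norm_num, ← Real.rpow_natCast 3 2,
            ← Real.rpow_mul (by norm_num)]
          norm_num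
  have haa : aa k ^ (-(2:ℝ)) ≤ ((k:ℝ)+1) ^ (-(2:ℝ)) := by
    apply rpow_anti (by linarith) ?_ (by norm_num)
    unfold aa; linarith
  have hsum : 1 + 2 * Real.log (bb k) ≤ 15 * ((k:ℝ)+1) ^ ((1:ℝ)/2) := by
    have h1 : (1:ℝ) ≤ ((k:ℝ)+1) ^ ((1:ℝ)/2) := Real.one_le_rpow (by linarith) (by norm_num)
    have h2 : Real.log (bb k) ≤ 6 * ((k:ℝ)+1) ^ ((1:ℝ)/2) := by
      calc Real.log (bb k) ≤ 2 * bb k ^ ((1:ℝ)/2) := hlog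
        _ ≤ 2 * (3 * ((k:ℝ)+1) ^ ((1:ℝ)/2)) := by linarith
        _ = 6 * ((k:ℝ)+1) ^ ((1:ℝ)/2) := by ring
    linarith
  have hnn : 0 ≤ ((k:ℝ)+1) ^ (-(2:ℝ)) := (Real.rpow_pos_of_pos (by linarith) _).le
  have hnn2 : (0:ℝ) ≤ 1 + 2 * Real.log (bb k) := by
    have := Real.log_nonneg (one_le_bb k); linarith
  calc Ck k = 2 * ((1 + 2 * Real.log (bb k)) * aa k ^ (-(2:ℝ))) := rfl
    _ ≤ 2 * ((15 * ((k:ℝ)+1) ^ ((1:ℝ)/2)) * ((k:ℝ)+1) ^ (-(2:ℝ))) := by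
        apply mul_le_mul_of_nonneg_left _ (by norm_num)
        exact mul_le_mul hsum haa (Real.rpow_pos_of_pos (aa_pos k) _).le
          (by positivity)
    _ = 30 * ((k : ℝ) + 1) ^ (-(3/2) : ℝ) := by
        rw [mul_assoc, ← Real.rpow_add (by linarith : (0:ℝ) < (k:ℝ)+1)]
        norm_num
        ring

lemma summable_Ck : Summable Ck :=
  Summable.of_nonneg_of_le Ck_nonneg Ck_le summable_shift32

lemma abs_Ak_le (k : ℕ) : |Ak k| ≤ Ck k := by
  have h := (tendsto_slope_k k).abs
  refine le_of_tendsto h ?_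
  filter_upwards [Ioc_mem_nhdsGT_of_mem (Set.mem_Ico.mpr ⟨le_refl (1:ℝ), one_lt_two⟩)] with s hs
  exact slope_bound hs k

lemma summable_Ak : Summable Ak :=
  Summable.of_norm_bounded summable_Ck fun k => by
    rw [Real.norm_eq_abs]; exact abs_Ak_le k

lemma summable_hk {s : ℝ} (hs : 1 < s) :
    Summable (fun k : ℕ => aa k ^ (-s) - bb k ^ (-s)) := by
  refine Summable.of_nonneg_of_le (fun k => ?_) (fun k => ?_)
    (summable_shift (p := -s) (by linarith))
  · have := rpow_anti (aa_pos k) (aa_le_bb k) (by linarith : (0:ℝ) ≤ s)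
    linarith
  · have h1 : aa k ^ (-s) ≤ ((k:ℝ) + 1) ^ (-s) := by
      apply rpow_anti (by positivity) ?_ (by linarith)
      unfold aa; have : (0:ℝ) ≤ (k:ℝ) := Nat.cast_nonneg k; linarith
    have h2 : (0:ℝ) ≤ bb k ^ (-s) := (Real.rpow_pos_of_pos (bb_pos k) _).le
    linarith

lemma tendsto_L_slope :
    Tendsto (fun s : ℝ => (Lf s - Real.pi / 4) / (s - 1)) (𝓝[>] 1) (𝓝 Atot) := by
  have main := tendsto_tsum_of_dominated_convergence (𝓕 := 𝓝[>] (1:ℝ))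
    (f := fun (s : ℝ) (k : ℕ) =>
      ((aa k ^ (-s) - bb k ^ (-s)) - (1 / aa k - 1 / bb k)) / (s - 1))
    (g := Ak) (bound := Ck) summable_Ck tendsto_slope_k ?_
  · refine main.congr' ?_
    filter_upwards [self_mem_nhdsWithin] with s hs
    have hs1 : (1:ℝ) < s := hs
    have hsum1 : Summable (fun k : ℕ => aa k ^ (-s) - bb k ^ (-s)) := summable_hk hs1
    have hsum2 : Summable (fun k : ℕ => 1 / aa k - 1 / bb k) := hasSum_pair.summable
    rw [tsum_div_const, Summable.tsum_sub hsum1 hsum2, ← Lf_eq hs1, hasSum_pair.tsum_eq]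
  · filter_upwards [Ioc_mem_nhdsGT_of_mem (Set.mem_Ico.mpr ⟨le_refl (1:ℝ), one_lt_two⟩)]
      with s hs k
    rw [Real.norm_eq_abs]
    exact slope_bound hs k

lemma tendsto_main :
    Tendsto (fun s : ℝ => 2 / Real.pi * Zf s * Lf s - Zf (2 * s - 1)) (𝓝[>] 1)
      (𝓝 (2 / Real.pi * Atot - Real.eulerMascheroniConstant / 2)) := by
  have ht : Tendsto (fun s : ℝ =>
      2 / Real.pi * ((s - 1) * Zf s) * ((Lf s - Real.pi / 4) / (s - 1))
        + (1/2) * (Zf s - 1 / (s - 1)) - (Zf (2*s-1) - 1 / (2*s - 2))) (𝓝[>] 1)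
      (𝓝 (2 / Real.pi * 1 * Atot + (1/2) * Real.eulerMascheroniConstant
        - Real.eulerMascheroniConstant)) :=
    (((tendsto_const_nhds.mul tendsto_sub_one_mul_Zf).mul tendsto_L_slope).add
      (tendsto_const_nhds.mul tendsto_Zf_sub)).sub tendsto_Zf2_sub
  have hval : 2 / Real.pi * 1 * Atot + (1/2) * Real.eulerMascheroniConstant
      - Real.eulerMascheroniConstant
      = 2 / Real.pi * Atot - Real.eulerMascheroniConstant / 2 := by ring
  rw [hval] at ht
  apply Tendsto.congr' _ ht
  filter_upwards [self_mem_nhdsWithin] with s hs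
  have h1 : s - 1 ≠ 0 := by
    simp only [Set.mem_Ioi] at hs; intro h; linarith
  have h2 : 2 * s - 2 ≠ 0 := by
    simp only [Set.mem_Ioi] at hs; intro h; linarith
  have hπ : Real.pi ≠ 0 := Real.pi_ne_zero
  field_simp
  ring

lemma abs_log_le {t : ℝ} (ht : 0 < t) : |Real.log t| ≤ 2 * t ^ (-(1/2) : ℝ) + t := by
  rcases le_or_gt 1 t with h | h
  · have hl : 0 ≤ Real.log t := Real.log_nonneg h
    have h2 : Real.log t ≤ t := (Real.log_le_sub_one_of_pos ht).trans (by linarith)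
    have h3 : 0 ≤ 2 * t ^ (-(1/2) : ℝ) := by positivity
    rw [abs_of_nonneg hl]; linarith
  · have hl : Real.log t ≤ 0 := Real.log_nonpos ht.le h.le
    rw [abs_of_nonpos hl]
    have h1 : -Real.log t = Real.log t⁻¹ := (Real.log_inv t).symm
    have h2 : Real.log t⁻¹ ≤ t⁻¹ ^ ((1/2):ℝ) / (1/2) :=
      Real.log_le_rpow_div (by positivity) (by norm_num)
    have h3 : t⁻¹ ^ ((1/2):ℝ) = t ^ (-(1/2) : ℝ) := by
      rw [Real.inv_rpow ht.le, ← Real.rpow_neg ht.le]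
    have h4 : t⁻¹ ^ ((1/2):ℝ) / (1/2) = 2 * t⁻¹ ^ ((1/2):ℝ) := by ring
    rw [h1]
    rw [h4, h3] at h2
    linarith

lemma integrableOn_rpow_exp {q c : ℝ} (hq : -1 < q) (hc : 0 < c) :
    MeasureTheory.IntegrableOn (fun t : ℝ => t ^ q * Real.exp (-(c * t))) (Set.Ioi 0) := by
  have h := integrableOn_rpow_mul_exp_neg_mul_rpow hq one_pos hc
  refine h.congr_fun (fun t ht => ?_) measurableSet_Ioi
  simp only [Real.rpow_one, neg_mul]

lemma integral_rpow_exp {q c : ℝ} (hq : -1 < q) (hc : 0 < c) :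
    ∫ t in Set.Ioi (0:ℝ), t ^ q * Real.exp (-(c * t))
      = c ^ (-(q+1)) * Real.Gamma (q+1) := by
  have h := integral_rpow_mul_exp_neg_mul_rpow one_pos hq hc
  rw [show (∫ t in Set.Ioi (0:ℝ), t ^ q * Real.exp (-(c * t)))
      = ∫ x in Set.Ioi (0:ℝ), x ^ q * Real.exp (-c * x ^ (1:ℝ)) from
    MeasureTheory.setIntegral_congr_fun measurableSet_Ioi fun t ht => by
      rw [Real.rpow_one, neg_mul], h]
  norm_num

lemma integrable_exp_log {c : ℝ} (hc : 0 < c) :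
    MeasureTheory.IntegrableOn (fun t : ℝ => Real.exp (-(c * t)) * Real.log t) (Set.Ioi 0) := by
  have hmaj : MeasureTheory.IntegrableOn
      (fun t : ℝ => 2 * (t ^ (-(1/2):ℝ) * Real.exp (-(c * t))) + t ^ (1:ℝ) * Real.exp (-(c * t)))
      (Set.Ioi 0) :=
    ((integrableOn_rpow_exp (by norm_num) hc).const_mul 2).add
      (integrableOn_rpow_exp (by norm_num) hc)
  refine MeasureTheory.Integrable.mono' hmaj ?_ ?_
  · apply Measurable.aestronglyMeasurable
    exact (Real.measurable_exp.comp (measurable_id.const_mul c).neg).mul Real.measurable_log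
  · rw [MeasureTheory.ae_restrict_iff' measurableSet_Ioi]
    filter_upwards with t ht
    have ht0 : (0:ℝ) < t := ht
    rw [norm_mul, Real.norm_eq_abs, Real.norm_eq_abs, abs_of_pos (Real.exp_pos _)]
    have h1 := abs_log_le ht0
    calc Real.exp (-(c*t)) * |Real.log t|
        ≤ Real.exp (-(c*t)) * (2 * t ^ (-(1/2):ℝ) + t) :=
          mul_le_mul_of_nonneg_left h1 (Real.exp_pos _).le
      _ = 2 * (t ^ (-(1/2):ℝ) * Real.exp (-(c*t))) + t ^ (1:ℝ) * Real.exp (-(c*t)) := by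
          rw [Real.rpow_one]; ring

lemma integral_exp_neg_log :
    ∫ t in Set.Ioi (0:ℝ), Real.exp (-t) * Real.log t = -Real.eulerMascheroniConstant := by
  have hd := Complex.hasDerivAt_GammaIntegral (s := 1) (by norm_num)
  have hre := hd.real_of_complex
  have heq : (fun x : ℝ => (Complex.GammaIntegral ↑x).re) =ᶠ[𝓝 (1:ℝ)] Real.Gamma := by
    filter_upwards [Ioi_mem_nhds (by norm_num : (0:ℝ) < 1)] with x hx
    rw [Complex.GammaIntegral_ofReal, Complex.ofReal_re, Real.Gamma_eq_integral hx]
  have hre2 := hre.congr_of_eventuallyEq heq.symm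
  have huniq := Real.hasDerivAt_Gamma_one.unique hre2
  rw [huniq]
  have hD : (∫ t : ℝ in Set.Ioi 0, (t:ℂ) ^ ((1:ℂ) - 1) * (Real.log t * Real.exp (-t)))
      = ((∫ t in Set.Ioi (0:ℝ), Real.exp (-t) * Real.log t : ℝ) : ℂ) := by
    have step1 : (∫ t : ℝ in Set.Ioi 0, (t:ℂ) ^ ((1:ℂ) - 1) * (Real.log t * Real.exp (-t)))
        = ∫ t : ℝ in Set.Ioi 0, ((Real.exp (-t) * Real.log t : ℝ) : ℂ) := by
      refine MeasureTheory.setIntegral_congr_fun measurableSet_Ioi fun t ht => ?_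
      rw [sub_self, Complex.cpow_zero, one_mul]
      push_cast
      ring
    rw [step1]
    exact integral_ofReal
  rw [hD, Complex.ofReal_re]

lemma integrable_exp {c : ℝ} (hc : 0 < c) :
    MeasureTheory.IntegrableOn (fun t : ℝ => Real.exp (-(c * t))) (Set.Ioi 0) := by
  have h := integrableOn_rpow_exp (q := 0) (by norm_num) hc
  refine h.congr_fun (fun t ht => ?_) measurableSet_Ioi
  simp only [Real.rpow_zero, one_mul]

lemma integral_exp_log {c : ℝ} (hc : 0 < c) :
    ∫ t in Set.Ioi (0:ℝ), Real.exp (-(c * t)) * Real.log t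
      = (-Real.eulerMascheroniConstant - Real.log c) / c := by
  have hsplit : ∀ t ∈ Set.Ioi (0:ℝ), Real.exp (-(c*t)) * Real.log t
      = Real.exp (-(c*t)) * Real.log (c*t) - Real.log c * Real.exp (-(c*t)) := by
    intro t ht
    rw [Real.log_mul hc.ne' (ne_of_gt ht)]
    ring
  rw [MeasureTheory.setIntegral_congr_fun measurableSet_Ioi hsplit]
  have hint1 : MeasureTheory.IntegrableOn
      (fun t : ℝ => Real.exp (-(c*t)) * Real.log (c*t)) (Set.Ioi 0) := by
    have h : MeasureTheory.IntegrableOn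
        (fun t : ℝ => Real.log c * Real.exp (-(c*t)) + Real.exp (-(c*t)) * Real.log t)
        (Set.Ioi 0) :=
      ((integrable_exp hc).const_mul (Real.log c)).add (integrable_exp_log hc)
    refine h.congr_fun (fun t ht => ?_) measurableSet_Ioi
    rw [Real.log_mul hc.ne' (ne_of_gt ht)]
    ring
  rw [MeasureTheory.integral_sub hint1 ((integrable_exp hc).const_mul (Real.log c))]
  have hcomp : (∫ t in Set.Ioi (0:ℝ), Real.exp (-(c*t)) * Real.log (c*t))
      = c⁻¹ * ∫ u in Set.Ioi (0:ℝ), Real.exp (-u) * Real.log u := by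
    have h := MeasureTheory.integral_comp_mul_left_Ioi
      (fun u : ℝ => Real.exp (-u) * Real.log u) 0 hc
    simp only [mul_zero, smul_eq_mul] at h
    exact h
  have hexp : (∫ t in Set.Ioi (0:ℝ), Real.exp (-(c*t))) = c⁻¹ := by
    have h := MeasureTheory.integral_comp_mul_left_Ioi (fun u : ℝ => Real.exp (-u)) 0 hc
    simp only [mul_zero, smul_eq_mul] at h
    rw [integral_exp_neg_Ioi_zero, mul_one] at h
    exact h
  rw [MeasureTheory.integral_const_mul, hexp, hcomp, integral_exp_neg_log]
  field_simp

lemma hasSum_cosh {t : ℝ} (ht : 0 < t) :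
    HasSum (fun k : ℕ => Real.exp (-(aa k * t)) - Real.exp (-(bb k * t)))
      (1 / (2 * Real.cosh t)) := by
  have hr0 : (0:ℝ) ≤ Real.exp (-(4*t)) := (Real.exp_pos _).le
  have hr1 : Real.exp (-(4*t)) < 1 := by
    rw [show (1:ℝ) = Real.exp 0 by rw [Real.exp_zero]]
    exact Real.exp_lt_exp.mpr (by linarith)
  have hgeo := (hasSum_geometric_of_lt_one hr0 hr1).mul_left
    (Real.exp (-t) - Real.exp (-(3*t)))
  have hterm : ∀ k : ℕ, (Real.exp (-t) - Real.exp (-(3*t))) * Real.exp (-(4*t)) ^ k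
      = Real.exp (-(aa k * t)) - Real.exp (-(bb k * t)) := by
    intro k
    rw [← Real.exp_nat_mul, sub_mul, ← Real.exp_add, ← Real.exp_add]
    have haad : aa k = 4 * (k:ℝ) + 1 := rfl
    have hbbd : bb k = 4 * (k:ℝ) + 3 := rfl
    congr 2
    · rw [haad]; push_cast; ring
    · rw [hbbd]; push_cast; ring
  have hval : (Real.exp (-t) - Real.exp (-(3*t))) * (1 - Real.exp (-(4*t)))⁻¹
      = 1 / (2 * Real.cosh t) := by
    have e3 : Real.exp (-(3*t)) = Real.exp (-t) ^ (3:ℕ) := by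
      rw [← Real.exp_nat_mul]; congr 1; push_cast; ring
    have e4 : Real.exp (-(4*t)) = Real.exp (-t) ^ (4:ℕ) := by
      rw [← Real.exp_nat_mul]; congr 1; push_cast; ring
    have hu : Real.exp (-t) ≠ 0 := (Real.exp_pos _).ne'
    have hexpt : Real.exp t = (Real.exp (-t))⁻¹ := by rw [Real.exp_neg t, inv_inv]
    have hkey : 2 * Real.cosh t = (Real.exp (-t))⁻¹ + Real.exp (-t) := by
      rw [Real.cosh_eq, hexpt]; ring
    have hne4 : 1 - Real.exp (-t) ^ (4:ℕ) ≠ 0 := by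
      rw [← e4]
      have : 0 < 1 - Real.exp (-(4*t)) := by linarith
      exact ne_of_gt this
    have hvne : (Real.exp (-t))⁻¹ + Real.exp (-t) ≠ 0 := by positivity
    rw [e3, e4, hkey]
    field_simp
    ring
  rw [show (fun k : ℕ => (Real.exp (-t) - Real.exp (-(3*t))) * Real.exp (-(4*t)) ^ k)
      = fun k : ℕ => Real.exp (-(aa k * t)) - Real.exp (-(bb k * t)) from funext hterm,
    hval] at hgeo
  exact hgeo

lemma norm_F_le (k : ℕ) {t : ℝ} (ht : 0 < t) :
    ‖Real.exp (-(aa k * t)) * Real.log t - Real.exp (-(bb k * t)) * Real.log t‖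
      ≤ 4 * (t ^ ((1:ℝ)/2) * Real.exp (-(aa k * t)))
        + 2 * (t ^ (2:ℝ) * Real.exp (-(aa k * t))) := by
  have hab : Real.exp (-(bb k * t)) ≤ Real.exp (-(aa k * t)) := by
    apply Real.exp_le_exp.mpr
    have := mul_le_mul_of_nonneg_right (aa_le_bb k) ht.le
    linarith
  have hdiff : Real.exp (-(aa k * t)) - Real.exp (-(bb k * t))
      ≤ 2 * t * Real.exp (-(aa k * t)) := by
    have hbb : bb k = aa k + 2 := by unfold aa bb; ring
    have h1 : Real.exp (-(bb k * t)) = Real.exp (-(aa k * t)) * Real.exp (-(2*t)) := by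
      rw [← Real.exp_add]; congr 1; rw [hbb]; ring
    have h2 : 1 - 2*t ≤ Real.exp (-(2*t)) := by
      have := Real.add_one_le_exp (-(2*t)); linarith
    calc Real.exp (-(aa k * t)) - Real.exp (-(bb k * t))
        = Real.exp (-(aa k * t)) * (1 - Real.exp (-(2*t))) := by rw [h1]; ring
      _ ≤ Real.exp (-(aa k * t)) * (2*t) :=
          mul_le_mul_of_nonneg_left (by linarith) (Real.exp_pos _).le
      _ = 2 * t * Real.exp (-(aa k * t)) := by ring
  have hlog := abs_log_le ht
  have hfact : Real.exp (-(aa k * t)) * Real.log t - Real.exp (-(bb k * t)) * Real.log t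
      = (Real.exp (-(aa k * t)) - Real.exp (-(bb k * t))) * Real.log t := by ring
  rw [hfact, Real.norm_eq_abs, abs_mul]
  have hd0 : 0 ≤ Real.exp (-(aa k * t)) - Real.exp (-(bb k * t)) := by linarith
  rw [abs_of_nonneg hd0]
  have e1 : t * t ^ (-(1/2):ℝ) = t ^ ((1:ℝ)/2) := by
    nth_rewrite 1 [← Real.rpow_one t]
    rw [← Real.rpow_add ht]
    norm_num
  have e2 : t * t = t ^ (2:ℝ) := by
    rw [show (2:ℝ) = ((2:ℕ):ℝ) by norm_num, Real.rpow_natCast]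
    ring
  calc (Real.exp (-(aa k * t)) - Real.exp (-(bb k * t))) * |Real.log t|
      ≤ (2 * t * Real.exp (-(aa k * t))) * (2 * t ^ (-(1/2):ℝ) + t) :=
        mul_le_mul hdiff hlog (abs_nonneg _) (by positivity)
    _ = 4 * (t * t ^ (-(1/2):ℝ)) * Real.exp (-(aa k * t))
        + 2 * (t * t) * Real.exp (-(aa k * t)) := by ring
    _ = 4 * (t ^ ((1:ℝ)/2) * Real.exp (-(aa k * t)))
        + 2 * (t ^ (2:ℝ) * Real.exp (-(aa k * t))) := by rw [e1, e2]; ring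

lemma Gamma32_le : Real.Gamma (3/2) ≤ 1 := by
  rw [show (3/2:ℝ) = 1/2 + 1 by norm_num, Real.Gamma_add_one (by norm_num),
    Real.Gamma_one_half_eq]
  have h1 : Real.sqrt Real.pi ≤ 2 := by
    rw [show (2:ℝ) = Real.sqrt 4 by rw [show (4:ℝ) = 2^2 by norm_num, Real.sqrt_sq]; norm_num]
    exact Real.sqrt_le_sqrt Real.pi_le_four
  linarith

lemma Gamma3_eq : Real.Gamma 3 = 2 := by
  rw [show (3:ℝ) = 2 + 1 by norm_num, Real.Gamma_add_one (by norm_num),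
    show (2:ℝ) = 1 + 1 by norm_num, Real.Gamma_add_one (by norm_num), Real.Gamma_one]
  norm_num

lemma integral_norm_F_le (k : ℕ) :
    (∫ t in Set.Ioi (0:ℝ),
        ‖Real.exp (-(aa k * t)) * Real.log t - Real.exp (-(bb k * t)) * Real.log t‖)
      ≤ 8 * ((k:ℝ) + 1) ^ (-(3/2):ℝ) := by
  have ha := aa_pos k
  have hint1 : MeasureTheory.IntegrableOn
      (fun t : ℝ => t ^ ((1:ℝ)/2) * Real.exp (-(aa k * t))) (Set.Ioi 0) :=
    integrableOn_rpow_exp (by norm_num) ha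
  have hint2 : MeasureTheory.IntegrableOn
      (fun t : ℝ => t ^ (2:ℝ) * Real.exp (-(aa k * t))) (Set.Ioi 0) :=
    integrableOn_rpow_exp (by norm_num) ha
  have hmajint : MeasureTheory.IntegrableOn
      (fun t : ℝ => 4 * (t ^ ((1:ℝ)/2) * Real.exp (-(aa k * t)))
        + 2 * (t ^ (2:ℝ) * Real.exp (-(aa k * t)))) (Set.Ioi 0) :=
    (hint1.const_mul 4).add (hint2.const_mul 2)
  have hle : (∫ t in Set.Ioi (0:ℝ),
      ‖Real.exp (-(aa k * t)) * Real.log t - Real.exp (-(bb k * t)) * Real.log t‖)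
      ≤ ∫ t in Set.Ioi (0:ℝ), (4 * (t ^ ((1:ℝ)/2) * Real.exp (-(aa k * t)))
        + 2 * (t ^ (2:ℝ) * Real.exp (-(aa k * t)))) := by
    refine MeasureTheory.integral_mono_of_nonneg ?_ hmajint ?_
    · filter_upwards with t
      positivity
    · rw [Filter.EventuallyLE, MeasureTheory.ae_restrict_iff' measurableSet_Ioi]
      filter_upwards with t ht
      exact norm_F_le k ht
  have hval : (∫ t in Set.Ioi (0:ℝ), (4 * (t ^ ((1:ℝ)/2) * Real.exp (-(aa k * t)))
      + 2 * (t ^ (2:ℝ) * Real.exp (-(aa k * t)))))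
      = 4 * (aa k ^ (-(3/2):ℝ) * Real.Gamma (3/2)) + 2 * (aa k ^ (-(3:ℝ)) * Real.Gamma 3) := by
    rw [MeasureTheory.integral_add (hint1.const_mul 4) (hint2.const_mul 2),
      MeasureTheory.integral_const_mul, MeasureTheory.integral_const_mul,
      integral_rpow_exp (by norm_num) ha, integral_rpow_exp (by norm_num) ha]
    norm_num
  have hbound : 4 * (aa k ^ (-(3/2):ℝ) * Real.Gamma (3/2)) + 2 * (aa k ^ (-(3:ℝ)) * Real.Gamma 3)
      ≤ 8 * ((k:ℝ) + 1) ^ (-(3/2):ℝ) := by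
    have h1 : aa k ^ (-(3:ℝ)) ≤ aa k ^ (-(3/2):ℝ) :=
      Real.rpow_le_rpow_of_exponent_le (one_le_aa k) (by norm_num)
    have h2 : aa k ^ (-(3/2):ℝ) ≤ ((k:ℝ) + 1) ^ (-(3/2):ℝ) := by
      apply rpow_anti (by positivity) ?_ (by norm_num)
      unfold aa; have : (0:ℝ) ≤ (k:ℝ) := Nat.cast_nonneg k; linarith
    have h3 : (0:ℝ) ≤ aa k ^ (-(3/2):ℝ) := (Real.rpow_pos_of_pos ha _).le
    have h4 : (0:ℝ) ≤ aa k ^ (-(3:ℝ)) := (Real.rpow_pos_of_pos ha _).le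
    have h5 : 0 ≤ Real.Gamma (3/2) := Real.Gamma_nonneg_of_nonneg (by norm_num)
    have h6 : 4 * (aa k ^ (-(3/2):ℝ) * Real.Gamma (3/2)) ≤ 4 * aa k ^ (-(3/2):ℝ) := by
      nlinarith [Gamma32_le]
    rw [Gamma3_eq]
    nlinarith
  linarith

lemma integral_eq :
    ∫ t in Set.Ioi (0:ℝ), Real.log t / Real.cosh t
      = 2 * (-Real.eulerMascheroniConstant * (Real.pi/4) + Atot) := by
  classical
  set F : ℕ → ℝ → ℝ := fun k t =>
    Real.exp (-(aa k * t)) * Real.log t - Real.exp (-(bb k * t)) * Real.log t with hF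
  have hFint : ∀ k, MeasureTheory.Integrable (F k) (volume.restrict (Set.Ioi 0)) := fun k =>
    (integrable_exp_log (aa_pos k)).sub (integrable_exp_log (bb_pos k))
  have hFsum : Summable (fun k => ∫ t in Set.Ioi (0:ℝ), ‖F k t‖) :=
    Summable.of_nonneg_of_le
      (fun k => MeasureTheory.integral_nonneg fun t => norm_nonneg _)
      integral_norm_F_le ((summable_shift (by norm_num)).mul_left 8)
  have hswap := MeasureTheory.integral_tsum_of_summable_integral_norm hFint hFsum
  have htsum : ∀ t ∈ Set.Ioi (0:ℝ), (∑' k, F k t) = Real.log t / (2 * Real.cosh t) := by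
    intro t ht
    have h := (hasSum_cosh ht).mul_right (Real.log t)
    have h2 : HasSum (fun k => F k t) (1 / (2 * Real.cosh t) * Real.log t) := by
      rw [show (fun k => F k t)
          = fun k => (Real.exp (-(aa k * t)) - Real.exp (-(bb k * t))) * Real.log t by
        funext k; simp only [hF]; ring]
      exact h
    rw [h2.tsum_eq]
    ring
  have hI : (∫ t in Set.Ioi (0:ℝ), (∑' k, F k t))
      = ∫ t in Set.Ioi (0:ℝ), Real.log t / (2 * Real.cosh t) :=
    MeasureTheory.setIntegral_congr_fun measurableSet_Ioi htsum
  have hFk : ∀ k, (∫ t in Set.Ioi (0:ℝ), F k t)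
      = -Real.eulerMascheroniConstant * (1/aa k - 1/bb k) + Ak k := by
    intro k
    have := MeasureTheory.integral_sub (μ := volume.restrict (Set.Ioi 0))
      (integrable_exp_log (aa_pos k)) (integrable_exp_log (bb_pos k))
    rw [show (∫ t in Set.Ioi (0:ℝ), F k t)
        = (∫ t in Set.Ioi (0:ℝ), Real.exp (-(aa k * t)) * Real.log t)
          - ∫ t in Set.Ioi (0:ℝ), Real.exp (-(bb k * t)) * Real.log t from this,
      integral_exp_log (aa_pos k), integral_exp_log (bb_pos k)]
    unfold Ak
    field_simp
    ring
  have hsum2 : (∑' k, ∫ t in Set.Ioi (0:ℝ), F k t)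
      = -Real.eulerMascheroniConstant * (Real.pi/4) + Atot := by
    rw [tsum_congr hFk,
      Summable.tsum_add (hasSum_pair.summable.mul_left _) summable_Ak,
      tsum_mul_left, hasSum_pair.tsum_eq]
    rfl
  have hhalf : (∫ t in Set.Ioi (0:ℝ), Real.log t / (2 * Real.cosh t))
      = (1/2) * ∫ t in Set.Ioi (0:ℝ), Real.log t / Real.cosh t := by
    rw [← MeasureTheory.integral_const_mul]
    refine MeasureTheory.setIntegral_congr_fun measurableSet_Ioi fun t ht => ?_
    rw [div_eq_mul_inv, div_eq_mul_inv, mul_inv]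
    ring
  have := hswap
  rw [hI, hhalf, hsum2] at this
  linarith

end ZLaux

theorem zeta_L_limit :
    Filter.Tendsto
      (fun s : ℝ =>
        2 / Real.pi * (∑' n : ℕ, ((n : ℝ) + 1) ^ (-s)) *
            (∑' n : ℕ, chi4 (n + 1) * ((n : ℝ) + 1) ^ (-s)) -
          ∑' n : ℕ, ((n : ℝ) + 1) ^ (-(2 * s - 1)))
      (nhdsWithin 1 (Set.Ioi 1))
      (nhds ((1 / Real.pi) * ∫ t in Set.Ioi (0 : ℝ), Real.log t / Real.cosh t)) := by
  have h := ZLaux.tendsto_main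
  have hval : 2 / Real.pi * ZLaux.Atot - Real.eulerMascheroniConstant / 2
      = (1 / Real.pi) * ∫ t in Set.Ioi (0:ℝ), Real.log t / Real.cosh t := by
    rw [ZLaux.integral_eq]
    have hπ : Real.pi ≠ 0 := Real.pi_ne_zero
    field_simp
    ring
  rw [hval] at h
  exact h
end
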